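/- Let c be a positive integer, f an integer with 0 ≤ f < c, and d a rational number with 2d ∈ ℤ such that d + c²/2 is an integer and d + c²/2 ≡ −f (mod c). Define ε(c,f) = (f/2)(c − f − 1 + f/c) and E = c³/24 + d²/(2c) − ε(c,f). Then E + 2d + 11c/6 is an integer. -/

import Mathlib

theorem stmt_6 (c f : ℤ) (hc : 0 < c) (hf0 : 0 ≤ f) (hfc : f < c)
    (d : ℚ) (h2d : ∃ k : ℤ, 2 * d = (k : ℚ))
    (m : ℤ) (hm : d + (c : ℚ) ^ 2 / 2 = (m : ℚ)) (hmod : m ≡ -f [ZMOD c]) :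
    ∃ n : ℤ,
      ((c : ℚ) ^ 3 / 24 + d ^ 2 / (2 * c)
          - (f : ℚ) / 2 * ((c : ℚ) - f - 1 + (f : ℚ) / c))
        + 2 * d + 11 * (c : ℚ) / 6 = (n : ℚ) := by
  have hdvd : c ∣ -f - m := hmod.dvd
  obtain ⟨t, ht⟩ := hdvd
  have hmval : m = -f - c * t := by linarith
  -- k1 : 6 ∣ c^3 - c
  have h6 : (6 : ℤ) ∣ c ^ 3 - c := by
    have : ((c : ZMod 6) ^ 3 - c) = 0 := by
      have : ∀ x : ZMod 6, x ^ 3 - x = 0 := by decide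
      exact this c
    have := (ZMod.intCast_zmod_eq_zero_iff_dvd (c ^ 3 - c) 6).mp (by push_cast; exact this)
    exact this
  obtain ⟨k1, hk1⟩ := h6
  have h2 : (2 : ℤ) ∣ c * t * (t + c) + f * (f + 1) := by
    have : ∀ x y z : ZMod 2, x * y * (y + x) + z * (z + 1) = 0 := by decide
    have := (ZMod.intCast_zmod_eq_zero_iff_dvd (c * t * (t + c) + f * (f + 1)) 2).mp
      (by push_cast; exact this c t f)
    exact this
  obtain ⟨k2, hk2⟩ := h2
  refine ⟨k1 + 2 * c + k2 + t * f + 2 * m - c ^ 2, ?_⟩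
  have hd : d = (m : ℚ) - (c : ℚ) ^ 2 / 2 := by linarith
  have hc0 : (c : ℚ) ≠ 0 := by exact_mod_cast hc.ne'
  subst hd hmval
  have hk1' : (c : ℚ) ^ 3 - c = 6 * k1 := by exact_mod_cast congrArg (Int.cast : ℤ → ℚ) hk1
  have hk2' : (c : ℚ) * t * (t + c) + f * (f + 1) = 2 * k2 := by
    exact_mod_cast congrArg (Int.cast : ℤ → ℚ) hk2
  push_cast
  field_simp
  ring_nf
  ring_nf at hk1' hk2'
  linear_combination (192 * (c:ℚ)) * hk1' + (576 * (c:ℚ)) * hk2'
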